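/- arXiv:2007.15845 — 4 statements merged into one kernel-verified Lean document; each statement's English description precedes it below -/
import Mathlib

section
/- Let X ⊆ ℝ^n be nonempty, closed, and convex; let f : ℝ^n → ℝ be continuously differentiable and μ_f-strongly convex on X; let F : ℝ^n → ℝ^n be continuous and monotone on X; and suppose SOL(X,F) is nonempty. Let (η_k) be a nonincreasing sequence of strictly positive scalars with lim_{k→∞} η_k = 0, let x*_{η_k} denote the unique solution of the regularized variational inequality VI(X, F + η_k ∇f), and let x* denote the unique minimizer of f over SOL(X,F). Then lim_{k→∞} x*_{η_k} = x*. -/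
open scoped RealInnerProductSpace
open Filter

/-- The solution set `SOL(X,G)` of the variational inequality `VI(X,G)`. -/
def VISol {n : ℕ} (X : Set (EuclideanSpace ℝ (Fin n)))
    (G : EuclideanSpace ℝ (Fin n) → EuclideanSpace ℝ (Fin n)) : Set (EuclideanSpace ℝ (Fin n)) :=
  {x | x ∈ X ∧ ∀ y ∈ X, 0 ≤ ⟪G x, y - x⟫}

/-- Under closedness/convexity of `X`, strong convexity and smoothness of `f`,
continuity and monotonicity of `F`, and nonemptiness of `SOL(X,F)`, the Tikhonov trajectory
`x*_{η_k}` (the solutions of the regularized problems `VI(X, F + η_k ∇f)`, with `η_k ↓ 0`)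
converges to the unique minimizer `x*` of `f` over `SOL(X,F)`. -/
theorem tikhonov_trajectory_converges {n : ℕ} (X : Set (EuclideanSpace ℝ (Fin n)))
    (hXne : X.Nonempty) (hXcl : IsClosed X) (hXcv : Convex ℝ X)
    (f : EuclideanSpace ℝ (Fin n) → ℝ) (hf : ContDiff ℝ 1 f)
    (μf : ℝ) (hμf : 0 < μf)
    (hstrong : ∀ x ∈ X, ∀ y ∈ X,
      f y + ⟪gradient f y, x - y⟫ + μf / 2 * ‖x - y‖ ^ 2 ≤ f x)
    (F : EuclideanSpace ℝ (Fin n) → EuclideanSpace ℝ (Fin n)) (hFc : Continuous F)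
    (hmono : ∀ x ∈ X, ∀ y ∈ X, 0 ≤ ⟪F x - F y, x - y⟫)
    (hSOL : (VISol X F).Nonempty)
    (η : ℕ → ℝ) (hηpos : ∀ k, 0 < η k) (hηmono : ∀ k, η (k + 1) ≤ η k)
    (hηlim : Tendsto η atTop (nhds 0))
    (xeta : ℕ → EuclideanSpace ℝ (Fin n))
    (hxeta : ∀ k, xeta k ∈ VISol X (fun z => F z + η k • gradient f z))
    (xstar : EuclideanSpace ℝ (Fin n))
    (hxstar : xstar ∈ VISol X F ∧ ∀ y ∈ VISol X F, f xstar ≤ f y) :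
    Tendsto xeta atTop (nhds xstar) := by
  obtain ⟨⟨hxstarX, hxstarVI⟩, hxstarmin⟩ := hxstar
  have hgradcont : Continuous (gradient f) := by
    have h1 : Continuous (fderiv ℝ f) := hf.continuous_fderiv one_ne_zero
    exact (InnerProductSpace.toDual ℝ _).symm.continuous.comp h1
  have hX : ∀ k, xeta k ∈ X := fun k => (hxeta k).1
  -- basic per-k inequality from the regularized VI
  have hVIk : ∀ k, ∀ y ∈ X, 0 ≤ ⟪F (xeta k), y - xeta k⟫
      + η k * ⟪gradient f (xeta k), y - xeta k⟫ := by
    intro k y hy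
    have h1 := (hxeta k).2 y hy
    rwa [inner_add_left, real_inner_smul_left] at h1
  -- key 1: the gradient term at the optimum point is nonnegative
  have key1 : ∀ k, 0 ≤ ⟪gradient f (xeta k), xstar - xeta k⟫ := by
    intro k
    have h1 := hVIk k xstar hxstarX
    have hm := hmono (xeta k) (hX k) xstar hxstarX
    have hv := hxstarVI (xeta k) (hX k)
    rw [inner_sub_left] at hm
    have h2 : ⟪F (xeta k), xstar - xeta k⟫ ≤ 0 := by
      have e1 : ⟪F (xeta k), xstar - xeta k⟫ = -⟪F (xeta k), xeta k - xstar⟫ := by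
        rw [← inner_neg_right, neg_sub]
      rw [e1]
      linarith
    nlinarith [hηpos k]
  -- key 2: strong convexity inequality against the optimum
  have key2 : ∀ k, f (xeta k) + μf / 2 * ‖xstar - xeta k‖ ^ 2 ≤ f xstar := by
    intro k
    have hs := hstrong xstar hxstarX (xeta k) (hX k)
    linarith [key1 k]
  -- boundedness of the trajectory
  have hbound : ∀ k, ‖xeta k - xstar‖ ≤ ‖gradient f xstar‖ / μf := by
    intro k
    have hs2 := hstrong (xeta k) (hX k) xstar hxstarX
    have hnr : ‖xeta k - xstar‖ = ‖xstar - xeta k‖ := norm_sub_rev _ _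
    have hcs : ⟪gradient f xstar, xstar - xeta k⟫
        ≤ ‖gradient f xstar‖ * ‖xstar - xeta k‖ := real_inner_le_norm _ _
    have hneg : -⟪gradient f xstar, xeta k - xstar⟫
        = ⟪gradient f xstar, xstar - xeta k⟫ := by
      rw [← inner_neg_right, neg_sub]
    -- μf t² ≤ ‖g*‖ t
    have ht : μf * ‖xstar - xeta k‖ ^ 2
        ≤ ‖gradient f xstar‖ * ‖xstar - xeta k‖ := by
      have := key2 k
      nlinarith [hnr ▸ hs2]
    rw [hnr, le_div_iff₀ hμf]
    rcases ((norm_nonneg (xstar - xeta k)).eq_or_lt.imp Eq.symm id) with h0 | h0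
    · rw [h0, zero_mul]
      exact norm_nonneg _
    · nlinarith
  have hball : ∀ k, xeta k ∈ Metric.closedBall xstar (‖gradient f xstar‖ / μf) := by
    intro k
    simpa [Metric.mem_closedBall, dist_eq_norm] using hbound k
  -- subsequence criterion
  apply Filter.tendsto_of_subseq_tendsto
  intro ns hns
  obtain ⟨a, _, ms, hms, hconv⟩ :=
    (isCompact_closedBall xstar (‖gradient f xstar‖ / μf)).tendsto_subseq
      (x := fun m => xeta (ns m)) (fun m => hball (ns m))
  refine ⟨ms, ?_⟩
  have hconv' : Tendsto (fun m => xeta (ns (ms m))) atTop (nhds a) := hconv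
  have hσ : Tendsto (fun m => ns (ms m)) atTop atTop := hns.comp hms.tendsto_atTop
  have hηto : Tendsto (fun m => η (ns (ms m))) atTop (nhds 0) := hηlim.comp hσ
  -- a ∈ X
  have haX : a ∈ X := hXcl.mem_of_tendsto hconv' (Eventually.of_forall fun m => hX _)
  -- a ∈ SOL(X,F)
  have haSOL : a ∈ VISol X F := by
    refine ⟨haX, fun y hy => ?_⟩
    have hlim : Tendsto (fun m => ⟪F (xeta (ns (ms m))), y - xeta (ns (ms m))⟫
        + η (ns (ms m)) * ⟪gradient f (xeta (ns (ms m))), y - xeta (ns (ms m))⟫)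
        atTop (nhds (⟪F a, y - a⟫ + 0 * ⟪gradient f a, y - a⟫)) := by
      refine Tendsto.add (Tendsto.inner ?_ ?_) (Tendsto.mul hηto (Tendsto.inner ?_ ?_))
      · exact (hFc.tendsto a).comp hconv'
      · exact tendsto_const_nhds.sub hconv'
      · exact (hgradcont.tendsto a).comp hconv'
      · exact tendsto_const_nhds.sub hconv'
    have h0 : (0 : ℝ) ≤ ⟪F a, y - a⟫ + 0 * ⟪gradient f a, y - a⟫ :=
      ge_of_tendsto' hlim (fun m => hVIk _ y hy)
    linarith
  -- f a ≤ f xstar with slack, and f xstar ≤ f a, force a = xstar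
  have hflim : f a + μf / 2 * ‖xstar - a‖ ^ 2 ≤ f xstar := by
    have hlim : Tendsto (fun m => f (xeta (ns (ms m)))
        + μf / 2 * ‖xstar - xeta (ns (ms m))‖ ^ 2) atTop
        (nhds (f a + μf / 2 * ‖xstar - a‖ ^ 2)) := by
      refine Tendsto.add ((hf.continuous.tendsto a).comp hconv') ?_
      exact (tendsto_const_nhds.mul
        (((tendsto_const_nhds.sub hconv').norm).pow 2))
    exact le_of_tendsto' hlim (fun m => key2 _)
  have hfa : f xstar ≤ f a := hxstarmin a haSOL
  have hnorm0 : ‖xstar - a‖ = 0 := by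
    have h2 : ‖xstar - a‖ ^ 2 ≤ 0 := by nlinarith
    nlinarith [norm_nonneg (xstar - a), sq_nonneg ‖xstar - a‖]
  have : xstar = a := by
    rwa [norm_eq_zero, sub_eq_zero] at hnorm0
  rwa [this]
end

section
/- Let X ⊆ ℝ^n be nonempty, closed, and convex; let f : ℝ^n → ℝ be continuously differentiable and μ_f-strongly convex on X; and let F : ℝ^n → ℝ^n be continuous and monotone on X. Let η > 0 and let x*_η ∈ X be a solution of the regularized variational inequality VI(X, F + η∇f). Then for every x̂ ∈ SOL(X,F): ⟨∇f(x*_η), x̂ − x*_η⟩ ≥ 0, and consequently f(x̂) ≥ f(x*_η) + (μ_f/2)‖x̂ − x*_η‖². -/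
open scoped RealInnerProductSpace

/-- If `x*_η` solves the regularized problem `VI(X, F + η∇f)` with `η > 0`,
then for every `x̂ ∈ SOL(X,F)`: `⟨∇f(x*_η), x̂ − x*_η⟩ ≥ 0`, and consequently
`f(x̂) ≥ f(x*_η) + (μ_f/2)‖x̂ − x*_η‖²`. -/
theorem regularized_solution_gradient_inequality {n : ℕ} (X : Set (EuclideanSpace ℝ (Fin n)))
    (hXne : X.Nonempty) (hXcl : IsClosed X) (hXcv : Convex ℝ X)
    (f : EuclideanSpace ℝ (Fin n) → ℝ) (hf : ContDiff ℝ 1 f)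
    (μf : ℝ) (hμf : 0 < μf)
    (hstrong : ∀ x ∈ X, ∀ y ∈ X,
      f y + ⟪gradient f y, x - y⟫ + μf / 2 * ‖x - y‖ ^ 2 ≤ f x)
    (F : EuclideanSpace ℝ (Fin n) → EuclideanSpace ℝ (Fin n)) (hFc : Continuous F)
    (hmono : ∀ x ∈ X, ∀ y ∈ X, 0 ≤ ⟪F x - F y, x - y⟫)
    (η : ℝ) (hη : 0 < η)
    (xeta : EuclideanSpace ℝ (Fin n))
    (hxeta : xeta ∈ VISol X (fun z => F z + η • gradient f z))
    (xhat : EuclideanSpace ℝ (Fin n)) (hxhat : xhat ∈ VISol X F) :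
    0 ≤ ⟪gradient f xeta, xhat - xeta⟫ ∧
      f xeta + μf / 2 * ‖xhat - xeta‖ ^ 2 ≤ f xhat := by
  obtain ⟨hxe, h1⟩ := hxeta
  obtain ⟨hxh, h2⟩ := hxhat
  have ha := h1 xhat hxh
  have hb := h2 xeta hxe
  have hc := hmono xeta hxe xhat hxh
  simp only [inner_add_left, inner_smul_left, inner_sub_left, RCLike.conj_to_real] at ha hc
  have hb' : ⟪F xhat, xhat - xeta⟫ ≤ 0 := by
    have : xeta - xhat = -(xhat - xeta) := by abel
    rw [this, inner_neg_right] at hb; linarith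
  have hc' : ⟪F xeta, xhat - xeta⟫ ≤ ⟪F xhat, xhat - xeta⟫ := by
    have : xeta - xhat = -(xhat - xeta) := by abel
    rw [this, inner_neg_right, inner_neg_right] at hc; linarith
  have key : 0 ≤ ⟪gradient f xeta, xhat - xeta⟫ := by
    nlinarith
  refine ⟨key, ?_⟩
  have hs := hstrong xhat hxh xeta hxe
  linarith
end

section
/- Let X ⊆ ℝ^n be nonempty, closed, and convex; let f : ℝ^n → ℝ be continuously differentiable and μ_f-strongly convex on X; and let F : ℝ^n → ℝ^n be continuous and monotone on X. Let η, η' > 0 and let x*_η and x*_{η'} be solutions of the regularized variational inequalities VI(X, F + η∇f) and VI(X, F + η'∇f), respectively. Then μ_f ‖x*_η − x*_{η'}‖ ≤ |1 − η'/η| · ‖∇f(x*_{η'})‖. -/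
open scoped RealInnerProductSpace

/-- If `x*_η` and `x*_{η'}` solve `VI(X, F + η∇f)` and `VI(X, F + η'∇f)`
with `η, η' > 0`, then `μ_f ‖x*_η − x*_{η'}‖ ≤ |1 − η'/η| · ‖∇f(x*_{η'})‖`. -/
theorem tikhonov_trajectory_increment_bound {n : ℕ} (X : Set (EuclideanSpace ℝ (Fin n)))
    (hXne : X.Nonempty) (hXcl : IsClosed X) (hXcv : Convex ℝ X)
    (f : EuclideanSpace ℝ (Fin n) → ℝ) (hf : ContDiff ℝ 1 f)
    (μf : ℝ) (hμf : 0 < μf)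
    (hstrong : ∀ x ∈ X, ∀ y ∈ X,
      f y + ⟪gradient f y, x - y⟫ + μf / 2 * ‖x - y‖ ^ 2 ≤ f x)
    (F : EuclideanSpace ℝ (Fin n) → EuclideanSpace ℝ (Fin n)) (hFc : Continuous F)
    (hmono : ∀ x ∈ X, ∀ y ∈ X, 0 ≤ ⟪F x - F y, x - y⟫)
    (η η' : ℝ) (hη : 0 < η) (hη' : 0 < η')
    (xeta xeta' : EuclideanSpace ℝ (Fin n))
    (hxeta : xeta ∈ VISol X (fun z => F z + η • gradient f z))
    (hxeta' : xeta' ∈ VISol X (fun z => F z + η' • gradient f z)) :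
    μf * ‖xeta - xeta'‖ ≤ |1 - η' / η| * ‖gradient f xeta'‖ := by
  by_cases hd : xeta = xeta'
  · simp [hd]; positivity
  have hdpos : 0 < ‖xeta - xeta'‖ := by
    rw [norm_pos_iff]; exact sub_ne_zero.mpr hd
  have h1 := hxeta.2 xeta' hxeta'.1
  have h2 := hxeta'.2 xeta hxeta.1
  have hm := hmono xeta hxeta.1 xeta' hxeta'.1
  have hs1 := hstrong xeta hxeta.1 xeta' hxeta'.1
  have hs2 := hstrong xeta' hxeta'.1 xeta hxeta.1
  have hnorm : ‖xeta' - xeta‖ = ‖xeta - xeta'‖ := norm_sub_rev _ _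
  have e1 : ∀ v : EuclideanSpace ℝ (Fin n),
      ⟪v, xeta - xeta'⟫ = -⟪v, xeta' - xeta⟫ := by
    intro v; rw [← inner_neg_right, neg_sub]
  simp only [inner_add_left, real_inner_smul_left, inner_sub_left] at h1 h2 hm
  simp only [e1] at h2
  rw [e1, e1] at hm
  rw [e1] at hs1
  rw [hnorm] at hs2
  -- key: η * μf * ‖d‖² ≤ (η - η') * ⟪g x', d⟫ where d = xeta' - xeta
  set b := ⟪gradient f xeta', xeta' - xeta⟫ with hb
  have hkey : η * μf * ‖xeta - xeta'‖ ^ 2 ≤ (η - η') * b := by nlinarith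
  have hcs : |b| ≤ ‖gradient f xeta'‖ * ‖xeta' - xeta‖ := abs_real_inner_le_norm _ _
  have hstep : (η - η') * b ≤ |η - η'| * (‖gradient f xeta'‖ * ‖xeta - xeta'‖) := by
    calc (η - η') * b ≤ |(η - η') * b| := le_abs_self _
    _ = |η - η'| * |b| := abs_mul _ _
    _ ≤ |η - η'| * (‖gradient f xeta'‖ * ‖xeta - xeta'‖) := by
        rw [← hnorm]; exact mul_le_mul_of_nonneg_left hcs (abs_nonneg _)
  have habs : |1 - η' / η| = |η - η'| / η := by
    have h : 1 - η' / η = (η - η') / η := by field_simp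
    rw [h, abs_div, abs_of_pos hη]
  rw [habs]
  rw [div_mul_eq_mul_div, le_div_iff₀ hη]
  nlinarith [hkey.trans hstep]
end

section
/- Let X ⊆ ℝ^n be nonempty, closed, and convex; let f : ℝ^n → ℝ be continuously differentiable and μ_f-strongly convex on X; let F : ℝ^n → ℝ^n be continuous and monotone on X; and suppose SOL(X,F) is nonempty. Let (η_k) be a nonincreasing sequence of strictly positive scalars with lim_{k→∞} η_k = 0 and let x*_{η_k} denote the unique solution of VI(X, F + η_k ∇f). Then there exists a constant C̄_f > 0 such that for all k ≥ 1: ‖x*_{η_k} − x*_{η_{k−1}}‖ ≤ (C̄_f/μ_f) · |1 − η_{k−1}/η_k|. -/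
set_option maxHeartbeats 1000000


open scoped RealInnerProductSpace
open Filter

/-- Along the Tikhonov trajectory (solutions `x*_{η_k}` of `VI(X, F + η_k ∇f)`
with `η_k ↓ 0`), there is a constant `C̄_f > 0` with
`‖x*_{η_k} − x*_{η_{k−1}}‖ ≤ (C̄_f/μ_f)·|1 − η_{k−1}/η_k|` for all `k ≥ 1`. -/
theorem tikhonov_trajectory_successive_bound {n : ℕ} (X : Set (EuclideanSpace ℝ (Fin n)))
    (hXne : X.Nonempty) (hXcl : IsClosed X) (hXcv : Convex ℝ X)
    (f : EuclideanSpace ℝ (Fin n) → ℝ) (hf : ContDiff ℝ 1 f)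
    (μf : ℝ) (hμf : 0 < μf)
    (hstrong : ∀ x ∈ X, ∀ y ∈ X,
      f y + ⟪gradient f y, x - y⟫ + μf / 2 * ‖x - y‖ ^ 2 ≤ f x)
    (F : EuclideanSpace ℝ (Fin n) → EuclideanSpace ℝ (Fin n)) (hFc : Continuous F)
    (hmono : ∀ x ∈ X, ∀ y ∈ X, 0 ≤ ⟪F x - F y, x - y⟫)
    (hSOL : (VISol X F).Nonempty)
    (η : ℕ → ℝ) (hηpos : ∀ k, 0 < η k) (hηmono : ∀ k, η (k + 1) ≤ η k)
    (hηlim : Tendsto η atTop (nhds 0))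
    (xeta : ℕ → EuclideanSpace ℝ (Fin n))
    (hxeta : ∀ k, xeta k ∈ VISol X (fun z => F z + η k • gradient f z)) :
    ∃ Cf : ℝ, 0 < Cf ∧ ∀ k : ℕ, 1 ≤ k →
      ‖xeta k - xeta (k - 1)‖ ≤ Cf / μf * |1 - η (k - 1) / η k| := by
  set g := gradient f with hg
  obtain ⟨c, hcX, hcVI⟩ := hSOL
  -- strong monotonicity of the gradient on X
  have hsc : ∀ x ∈ X, ∀ y ∈ X, μf * ‖x - y‖ ^ 2 ≤ ⟪g x - g y, x - y⟫ := by
    intro x hx y hy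
    have h1 := hstrong x hx y hy
    have h2 := hstrong y hy x hx
    have e1 : (⟪g x, y - x⟫ : ℝ) = -⟪g x, x - y⟫ := by
      rw [← neg_sub x y, inner_neg_right]
    have e2 : (⟪g x - g y, x - y⟫ : ℝ) = ⟪g x, x - y⟫ - ⟪g y, x - y⟫ :=
      inner_sub_left _ _ _
    have e3 : ‖y - x‖ = ‖x - y‖ := norm_sub_rev _ _
    rw [e3] at h2
    linarith
  -- the trajectory stays in a ball around c
  set R := ‖g c‖ / μf with hR
  have hRnn : 0 ≤ R := div_nonneg (norm_nonneg _) hμf.le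
  have hball : ∀ j, ‖xeta j - c‖ ≤ R := by
    intro j
    obtain ⟨hjX, hjVI⟩ := hxeta j
    have hA := hjVI c hcX
    have hB := hcVI (xeta j) hjX
    have hMo := hmono (xeta j) hjX c hcX
    set a := xeta j with ha
    have eF : (⟪F a - F c, a - c⟫ : ℝ) = ⟪F a, a - c⟫ - ⟪F c, a - c⟫ := inner_sub_left _ _ _
    have e4 : (⟪F a, c - a⟫ : ℝ) = -⟪F a, a - c⟫ := by rw [← neg_sub a c, inner_neg_right]
    have h1 : (⟪F a, c - a⟫ : ℝ) ≤ 0 := by linarith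
    have e5 : (⟪(fun z => F z + η j • g z) a, c - a⟫ : ℝ)
        = ⟪F a, c - a⟫ + η j * ⟪g a, c - a⟫ := by
      simp only [inner_add_left, real_inner_smul_left]
    rw [e5] at hA
    have h2 : (0 : ℝ) ≤ η j * ⟪g a, c - a⟫ := by linarith
    have e6 : (⟪g a, c - a⟫ : ℝ) = -⟪g a, a - c⟫ := by rw [← neg_sub a c, inner_neg_right]
    have h3 : (⟪g a, a - c⟫ : ℝ) ≤ 0 := by nlinarith [hηpos j]
    have h4 := hsc a hjX c hcX
    have e7 : (⟪g a - g c, a - c⟫ : ℝ) = ⟪g a, a - c⟫ - ⟪g c, a - c⟫ := inner_sub_left _ _ _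
    have hcs : |(⟪g c, a - c⟫ : ℝ)| ≤ ‖g c‖ * ‖a - c‖ := abs_real_inner_le_norm _ _
    have h5 : μf * ‖a - c‖ ^ 2 ≤ ‖g c‖ * ‖a - c‖ := by
      nlinarith [neg_abs_le (⟪g c, a - c⟫ : ℝ)]
    rcases eq_or_lt_of_le (norm_nonneg (a - c)) with h0 | h0
    · rw [← h0]; exact hRnn
    · rw [hR, le_div_iff₀ hμf]
      nlinarith
  -- uniform bound on the gradient along the trajectory
  have hgc : Continuous g := by
    have h1 : Continuous (fderiv ℝ f) := hf.continuous_fderiv one_ne_zero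
    exact (InnerProductSpace.toDual ℝ (EuclideanSpace ℝ (Fin n))).symm.continuous.comp h1
  obtain ⟨M, hM⟩ := (isCompact_closedBall c R).exists_bound_of_continuousOn hgc.continuousOn
  refine ⟨max M 1, lt_of_lt_of_le one_pos (le_max_right _ _), ?_⟩
  intro k hk
  obtain ⟨haX, haVI⟩ := hxeta k
  obtain ⟨hbX, hbVI⟩ := hxeta (k - 1)
  set a := xeta k with ha
  set b := xeta (k - 1) with hb
  have h1 := haVI b hbX
  have h2 := hbVI a haX
  have hm := hmono a haX b hbX
  have hsck := hsc a haX b hbX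
  have hηk := hηpos k
  have hle : η k ≤ η (k - 1) := by
    have := hηmono (k - 1)
    rwa [Nat.sub_add_cancel hk] at this
  have e1 : (⟪(fun z => F z + η k • g z) a, b - a⟫ : ℝ)
      = ⟪F a, b - a⟫ + η k * ⟪g a, b - a⟫ := by
    simp only [inner_add_left, real_inner_smul_left]
  have e2 : (⟪(fun z => F z + η (k - 1) • g z) b, a - b⟫ : ℝ)
      = ⟪F b, a - b⟫ + η (k - 1) * ⟪g b, a - b⟫ := by
    simp only [inner_add_left, real_inner_smul_left]
  rw [e1] at h1; rw [e2] at h2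
  have e3 : (⟪F a - F b, a - b⟫ : ℝ) = ⟪F a, a - b⟫ - ⟪F b, a - b⟫ := inner_sub_left _ _ _
  have e4 : (⟪F a, b - a⟫ : ℝ) = -⟪F a, a - b⟫ := by rw [← neg_sub a b, inner_neg_right]
  have e5 : (⟪g a, b - a⟫ : ℝ) = -⟪g a, a - b⟫ := by rw [← neg_sub a b, inner_neg_right]
  have e6 : (⟪g a - g b, a - b⟫ : ℝ) = ⟪g a, a - b⟫ - ⟪g b, a - b⟫ := inner_sub_left _ _ _
  -- key inequality
  have key : η k * (μf * ‖a - b‖ ^ 2) ≤ (η (k - 1) - η k) * ⟪g b, a - b⟫ := by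
    nlinarith [mul_le_mul_of_nonneg_left hsck hηk.le]
  have hb_ball : b ∈ Metric.closedBall c R := by
    rw [Metric.mem_closedBall, dist_eq_norm]; exact hball (k - 1)
  have hMb : ‖g b‖ ≤ M := hM _ hb_ball
  have hMnn : 0 ≤ M := le_trans (norm_nonneg _) hMb
  have hcs : (⟪g b, a - b⟫ : ℝ) ≤ ‖g b‖ * ‖a - b‖ := real_inner_le_norm _ _
  have key2 : η k * (μf * ‖a - b‖ ^ 2) ≤ (η (k - 1) - η k) * (M * ‖a - b‖) := by
    have hd : (0 : ℝ) ≤ η (k - 1) - η k := by linarith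
    have s1 : (η (k - 1) - η k) * ⟪g b, a - b⟫ ≤ (η (k - 1) - η k) * (‖g b‖ * ‖a - b‖) :=
      mul_le_mul_of_nonneg_left hcs hd
    have s2 : (η (k - 1) - η k) * (‖g b‖ * ‖a - b‖) ≤ (η (k - 1) - η k) * (M * ‖a - b‖) :=
      mul_le_mul_of_nonneg_left (mul_le_mul_of_nonneg_right hMb (norm_nonneg _)) hd
    linarith
  have habs : |1 - η (k - 1) / η k| = (η (k - 1) - η k) / η k := by
    have hnp : 1 - η (k - 1) / η k ≤ 0 := by
      rw [sub_nonpos, le_div_iff₀ hηk]; linarith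
    rw [abs_of_nonpos hnp]
    field_simp
    ring
  rw [habs]
  have hd : (0 : ℝ) ≤ η (k - 1) - η k := by linarith
  rcases eq_or_lt_of_le (norm_nonneg (a - b)) with h0 | h0
  · rw [← h0]
    apply mul_nonneg
    · exact div_nonneg (le_trans zero_le_one (le_max_right M 1)) hμf.le
    · exact div_nonneg hd hηk.le
  · have step : μf * η k * ‖a - b‖ ≤ M * (η (k - 1) - η k) := by
      have := le_of_mul_le_mul_right (by nlinarith : (μf * η k * ‖a - b‖) * ‖a - b‖
        ≤ (M * (η (k - 1) - η k)) * ‖a - b‖) h0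
      exact this
    rw [div_mul_div_comm, le_div_iff₀ (by positivity : (0 : ℝ) < μf * η k)]
    have hMmax : M ≤ max M 1 := le_max_left _ _
    nlinarith
end
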